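/- Let (X,≤) be a quasiordered set and P_SO(X) the semigroup of strongly order-preserving partial functions on X under composition, with D(f) the identity restricted to the down-set generated by dom(f) and R(f) defined dually via im(f). Then P_SO(X) satisfies the right ample condition: ef = f·R(ef) for every strongly order-preserving partial function f and every e ∈ D(P_SO(X)). -/

import Mathlib

/-- Composition of partial functions (encoded as `X → Option X`),
applying `f` first and then `g`. -/
def pcomp {X : Type*} (f g : X → Option X) : X → Option X :=
  fun x => (f x).bind g

/-- `f` is strongly order-preserving with respect to the quasiorder `r`. -/
def StronglyOrderPreserving {X : Type*} (r : X → X → Prop) (f : X → Option X) : Prop :=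
  ∀ x y a b : X, f x = some a → f y = some b → (r x y ↔ r a b)

open Classical in
/-- `D(f)`: the identity restricted to the down-set generated by `dom(f)`. -/
noncomputable def Dop {X : Type*} (r : X → X → Prop) (f : X → Option X) : X → Option X :=
  fun x => if ∃ y : X, (f y).isSome ∧ r x y then some x else none

open Classical in
/-- `R(f)`: the identity restricted to the down-set generated by `im(f)`. -/
noncomputable def Rop {X : Type*} (r : X → X → Prop) (f : X → Option X) : X → Option X :=
  fun x => if ∃ a b : X, f a = some b ∧ r x b then some x else none

theorem stmt_14 {X : Type*} (r : X → X → Prop)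
    (hrefl : ∀ x : X, r x x) (htrans : ∀ x y z : X, r x y → r y z → r x z)
    (f : X → Option X) (hf : StronglyOrderPreserving r f)
    (e : X → Option X)
    (he : ∃ g : X → Option X, StronglyOrderPreserving r g ∧ e = Dop r g) :
    pcomp e f = pcomp f (Rop r (pcomp e f)) := by
  classical
  obtain ⟨g, _, rfl⟩ := he
  funext x
  simp only [pcomp, Dop, Rop]
  by_cases hP : ∃ y : X, (g y).isSome ∧ r x y
  · simp only [hP, if_pos, Option.bind_some]
    cases hfx : f x with
    | none => simp
    | some b =>
      simp only [Option.bind_some, Rop, pcomp, Dop]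
      refine (if_pos ?_).symm
      exact ⟨x, b, by simp [hP, hfx], hrefl b⟩
  · rw [if_neg hP]
    show (none : Option X) = _
    cases hfx : f x with
    | none => simp
    | some b =>
      simp only [Option.bind_some, Rop, pcomp, Dop]
      refine (if_neg ?_).symm
      rintro ⟨a, c, hac, hbc⟩
      by_cases hPa : ∃ y : X, (g y).isSome ∧ r a y
      · rw [if_pos hPa, Option.bind_some] at hac
        have hxa : r x a := (hf x a b c hfx hac).mpr hbc
        obtain ⟨y, hy, hay⟩ := hPa
        exact hP ⟨y, hy, htrans _ _ _ hxa hay⟩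
      · simp [hPa] at hac
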